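/- Let (L ⊕ V, d, α + α_V) be an extension of the Hom-algebra (L,δ,α) by the abelian Hom-algebra (V, 0, α_V), where d = δ + λ_r + λ_l + θ (so μ = 0). Let h : L → V be a linear map with h ∘ α = α_V ∘ h, and set d' = d + [d,h]_l, so that d'(x+v, y+w) = δ(x,y) + λ_r(v,y) + λ_l(x,w) + θ(x,y) + λ_r(h(x),y) + λ_l(x,h(y)) − h(δ(x,y)). Then the linear map Φ : L ⊕ V → L ⊕ V defined by Φ(x+v) = x + h(x) + v is an isomorphism of Hom-algebras from (L⊕V, d', α+α_V) to (L⊕V, d, α+α_V) satisfying Φ(d'(x+v, y+w)) = d(Φ(x+v), Φ(y+w)), Φ ∘ i_0 = i_0, and π_0 ∘ Φ = π_0 (with i_0(v) = v, π_0(x+v) = x); hence the two extensions are equivalent. -/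

import Mathlib

open Finset

section NRPreamble

variable {M : Type*} [AddCommGroup M]

/-- The `(p,·)`-unshuffles: permutations strictly increasing on the first `p`
positions and on the remaining positions. -/
def IsUnshuffle {N : ℕ} (p : ℕ) (σ : Equiv.Perm (Fin N)) : Prop :=
  (∀ i j : Fin N, i < j → (j : ℕ) < p → σ i < σ j) ∧
  (∀ i j : Fin N, i < j → p ≤ (i : ℕ) → σ i < σ j)

instance {N p : ℕ} : DecidablePred (IsUnshuffle (N := N) p) := fun _ => by
  unfold IsUnshuffle; infer_instance

/-- Insertion position (0-indexed, i.e. `l(σ) - 1`) for the left circle product: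
the number of second-block values below the image of the last first-block position. -/
def insPosL {m n N : ℕ} (h : m + n = N + 1 ∧ 1 ≤ m ∧ 1 ≤ n) (σ : Equiv.Perm (Fin N)) :
    Fin m :=
  ⟨(univ.filter (fun s : Fin (m - 1) =>
      σ ⟨n + (s : ℕ), by omega⟩ < σ ⟨n - 1, by omega⟩)).card, by
    have hc := Finset.card_filter_le (univ : Finset (Fin (m - 1)))
      (fun s : Fin (m - 1) => σ ⟨n + (s : ℕ), by omega⟩ < σ ⟨n - 1, by omega⟩)
    simp only [Finset.card_univ, Fintype.card_fin] at hc
    omega⟩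

/-- Insertion position (0-indexed, i.e. `r(σ) - 1`) for the right circle product:
the number of second-block values below the image of the first position. -/
def insPosR {m n N : ℕ} (h : m + n = N + 1 ∧ 1 ≤ m ∧ 1 ≤ n) (σ : Equiv.Perm (Fin N)) :
    Fin m :=
  ⟨(univ.filter (fun s : Fin (m - 1) =>
      σ ⟨n + (s : ℕ), by omega⟩ < σ ⟨0, by omega⟩)).card, by
    have hc := Finset.card_filter_le (univ : Finset (Fin (m - 1)))
      (fun s : Fin (m - 1) => σ ⟨n + (s : ℕ), by omega⟩ < σ ⟨0, by omega⟩)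
    simp only [Finset.card_univ, Fintype.card_fin] at hc
    omega⟩

/-- The left circle product `f ∘ₗ g`, realized as an `N`-ary map (it vanishes by
convention unless `m + n = N + 1` with `m, n ≥ 1`). -/
noncomputable def circL (β : M → M) {m n : ℕ}
    (f : (Fin m → M) → M) (g : (Fin n → M) → M) (N : ℕ) : (Fin N → M) → M :=
  fun a =>
    if h : m + n = N + 1 ∧ 1 ≤ m ∧ 1 ≤ n then
      ∑ σ ∈ univ.filter (IsUnshuffle (N := N) n),
        (have hb : ((insPosL h σ : ℕ)) < m := (insPosL h σ).isLt
        ((-1 : ℤ) ^ ((insPosL h σ : ℕ)) * ((Equiv.Perm.sign σ : ℤˣ) : ℤ)) •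
          f (fun j : Fin m =>
            if hj : (j : ℕ) < ((insPosL h σ : ℕ)) then
              β^[n - 1] (a (σ ⟨n + (j : ℕ), by omega⟩))
            else if hj' : (j : ℕ) = ((insPosL h σ : ℕ)) then
              g (fun t : Fin n => a (σ ⟨(t : ℕ), by omega⟩))
            else
              β^[n - 1] (a (σ ⟨n + (j : ℕ) - 1, by omega⟩))))
    else 0

/-- The right circle product `f ∘ᵣ g`. -/
noncomputable def circR (β : M → M) {m n : ℕ}
    (f : (Fin m → M) → M) (g : (Fin n → M) → M) (N : ℕ) : (Fin N → M) → M :=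
  fun a =>
    if h : m + n = N + 1 ∧ 1 ≤ m ∧ 1 ≤ n then
      ∑ σ ∈ univ.filter (IsUnshuffle (N := N) n),
        (have hb : ((insPosR h σ : ℕ)) < m := (insPosR h σ).isLt
        ((-1 : ℤ) ^ ((insPosR h σ : ℕ)) * ((Equiv.Perm.sign σ : ℤˣ) : ℤ)) •
          f (fun j : Fin m =>
            if hj : (j : ℕ) < ((insPosR h σ : ℕ)) then
              β^[n - 1] (a (σ ⟨n + (j : ℕ), by omega⟩))
            else if hj' : (j : ℕ) = ((insPosR h σ : ℕ)) then
              g (fun t : Fin n => a (σ ⟨(t : ℕ), by omega⟩))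
            else
              β^[n - 1] (a (σ ⟨n + (j : ℕ) - 1, by omega⟩))))
    else 0

/-- The circle product for Hom-Lie algebras: `g` is always inserted in the first slot. -/
noncomputable def circLie (β : M → M) {m n : ℕ}
    (f : (Fin m → M) → M) (g : (Fin n → M) → M) (N : ℕ) : (Fin N → M) → M :=
  fun a =>
    if h : m + n = N + 1 ∧ 1 ≤ m ∧ 1 ≤ n then
      - ∑ σ ∈ univ.filter (IsUnshuffle (N := N) n),
          (((Equiv.Perm.sign σ : ℤˣ) : ℤ)) •
            f (fun j : Fin m =>
              if hj : (j : ℕ) = 0 then g (fun t : Fin n => a (σ ⟨(t : ℕ), by omega⟩))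
              else β^[n - 1] (a (σ ⟨n + (j : ℕ) - 1, by omega⟩)))
    else 0

/-- The left `β`-Nijenhuis–Richardson bracket. -/
noncomputable def bracketL (β : M → M) {m n : ℕ}
    (f : (Fin m → M) → M) (g : (Fin n → M) → M) (N : ℕ) : (Fin N → M) → M :=
  fun a => circL β f g N a - ((-1 : ℤ) ^ ((m - 1) * (n - 1))) • circL β g f N a

/-- The right `β`-Nijenhuis–Richardson bracket. -/
noncomputable def bracketR (β : M → M) {m n : ℕ}
    (f : (Fin m → M) → M) (g : (Fin n → M) → M) (N : ℕ) : (Fin N → M) → M :=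
  fun a => circR β f g N a - ((-1 : ℤ) ^ ((m - 1) * (n - 1))) • circR β g f N a

/-- The `β`-Nijenhuis–Richardson bracket for Hom-Lie algebras. -/
noncomputable def bracketLie (β : M → M) {m n : ℕ}
    (f : (Fin m → M) → M) (g : (Fin n → M) → M) (N : ℕ) : (Fin N → M) → M :=
  fun a => circLie β f g N a - ((-1 : ℤ) ^ ((m - 1) * (n - 1))) • circLie β g f N a

/-- `f` commutes with the twisting map `β` (the `k`-β-cochain condition). -/
def IsBetaCochain (β : M → M) {k : ℕ} (f : (Fin k → M) → M) : Prop :=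
  ∀ a : Fin k → M, β (f a) = f (fun i => β (a i))

/-- `f` is a `k`-`β`-cochain: a `k`-linear map commuting with `β`. -/
def IsCochain (K : Type*) [Field K] {M : Type*} [AddCommGroup M] [Module K M]
    (β : M → M) {k : ℕ} (f : (Fin k → M) → M) : Prop :=
  (∃ F : MultilinearMap K (fun _ : Fin k => M) M, ⇑F = f) ∧ IsBetaCochain β f

/-- View a binary map as a `2`-ary map. -/
def fn2 {A : Type*} (d : A → A → A) : (Fin 2 → A) → A := fun a => d (a 0) (a 1)

/-- Left Hom-Leibniz identity. -/
def IsLeftHomLeibniz {A : Type*} [AddCommGroup A] (β : A → A) (d : A → A → A) : Prop :=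
  ∀ x y z : A, d (β x) (d y z) = d (d x y) (β z) + d (β y) (d x z)

/-- Right Hom-Leibniz identity. -/
def IsRightHomLeibniz {A : Type*} [AddCommGroup A] (β : A → A) (d : A → A → A) : Prop :=
  ∀ x y z : A, d (β x) (d y z) = d (d x y) (β z) - d (d x z) (β y)

/-- Alternating `k`-ary map. -/
def IsAlt {k : ℕ} (f : (Fin k → M) → M) : Prop :=
  ∀ a : Fin k → M, ∀ i j : Fin k, i ≠ j → a i = a j → f a = 0

/-- Insert the value `x` in slot `i` of an `m`-tuple whose remaining entries are
given (in order) by `b`. -/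
def insSlot {m : ℕ} (i : Fin m) (x : M) (b : Fin (m - 1) → M) : Fin m → M :=
  fun p => if hp : (p : ℕ) < (i : ℕ) then b ⟨(p : ℕ), by omega⟩
    else if hpe : (p : ℕ) = (i : ℕ) then x
    else b ⟨(p : ℕ) - 1, by omega⟩

/-- The pair `(f, g)` is an `(m,n)`-`β`-cochain. -/
def IsPairCochain (K : Type*) [Field K] {M : Type*} [AddCommGroup M] [Module K M]
    (β : M → M) {m n : ℕ} (f : (Fin m → M) → M) (g : (Fin n → M) → M) : Prop :=
  IsCochain K β f ∧ IsCochain K β g ∧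
  ∀ i j : Fin m, i < j → ∀ (b : Fin (m - 1) → M) (c : Fin n → M),
    f (insSlot i (g c) b) = - f (insSlot j (g c) b)

end NRPreamble

section ExtPreamble

variable {K : Type*} [Field K] {L V : Type*} [AddCommGroup L] [Module K L]
  [AddCommGroup V] [Module K V]

/-- The twisting map `α + α_V` on `L ⊕ V`. -/
def extBeta (α : L →ₗ[K] L) (αV : V →ₗ[K] V) : L × V → L × V := fun p => (α p.1, αV p.2)

/-- `δ` viewed as a binary map on `L ⊕ V`. -/
def liftD (δ : L →ₗ[K] L →ₗ[K] L) : L × V → L × V → L × V := fun p q => (δ p.1 q.1, 0)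

/-- `λ = λ_l + λ_r` viewed as a binary map on `L ⊕ V`. -/
def liftLam (lamL : L →ₗ[K] V →ₗ[K] V) (lamR : V →ₗ[K] L →ₗ[K] V) :
    L × V → L × V → L × V := fun p q => (0, lamL p.1 q.2 + lamR p.2 q.1)

/-- `μ` viewed as a binary map on `L ⊕ V`. -/
def liftMu (μ : V →ₗ[K] V →ₗ[K] V) : L × V → L × V → L × V := fun p q => (0, μ p.2 q.2)

/-- `θ` viewed as a binary map on `L ⊕ V`. -/
def liftTheta (θ : L →ₗ[K] L →ₗ[K] V) : L × V → L × V → L × V := fun p q => (0, θ p.1 q.1)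

/-- The binary map `d = δ + λ_l + λ_r + μ + θ` on `L ⊕ V`. -/
def dSum (δ : L →ₗ[K] L →ₗ[K] L) (μ : V →ₗ[K] V →ₗ[K] V)
    (lamL : L →ₗ[K] V →ₗ[K] V) (lamR : V →ₗ[K] L →ₗ[K] V)
    (θ : L →ₗ[K] L →ₗ[K] V) : L × V → L × V → L × V :=
  fun p q => (δ p.1 q.1, θ p.1 q.1 + lamL p.1 q.2 + lamR p.2 q.1 + μ p.2 q.2)

end ExtPreamble

section Helpers
variable {M : Type*} [AddCommGroup M]

lemma filt1 : (univ.filter (IsUnshuffle (N := 2) 1)) = {1, Equiv.swap 0 1} := by decide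
lemma filt2 : (univ.filter (IsUnshuffle (N := 2) 2)) = {1} := by decide

lemma circL21 (β : M → M) (f : (Fin 2 → M) → M) (g : (Fin 1 → M) → M) (a : Fin 2 → M) :
    circL β f g 2 a
      = f (Fin.cons (g (fun _ => a 0)) (fun _ => a 1))
        + f (Fin.cons (a 0) (fun _ => g (fun _ => a 1))) := by
  have hc : (2:ℕ) + 1 = 2 + 1 ∧ 1 ≤ 2 ∧ 1 ≤ 1 := by omega
  rw [circL, dif_pos hc, filt1, Finset.sum_insert (by decide), Finset.sum_singleton]
  have h1 : ((insPosL hc (1 : Equiv.Perm (Fin 2)) : Fin 2) : ℕ) = 0 := by rfl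
  have h2 : ((insPosL hc (Equiv.swap 0 1 : Equiv.Perm (Fin 2)) : Fin 2) : ℕ) = 1 := by rfl
  simp only [h1, h2]
  simp only [pow_zero, pow_one, Equiv.Perm.sign_one, Units.val_one, mul_one, one_mul,
    Equiv.Perm.sign_swap (show (0:Fin 2) ≠ 1 by decide), Units.val_neg, neg_mul, neg_neg,
    one_smul]
  congr 1
  · congr 1
    funext j
    fin_cases j <;> simp [Fin.cons_zero, Fin.cons_succ, Equiv.Perm.one_apply]
  · congr 1
    funext j
    fin_cases j <;>
      simp [Fin.cons_zero, Fin.cons_succ, Equiv.swap_apply_left, Equiv.swap_apply_right,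
        show ((⟨1, by omega⟩ : Fin 2)) = 1 from rfl, show ((⟨0, by omega⟩ : Fin 2)) = 0 from rfl]

lemma circL12 (β : M → M) (f : (Fin 2 → M) → M) (g : (Fin 1 → M) → M) (a : Fin 2 → M) :
    circL β g f 2 a = g (fun _ => f a) := by
  have hc : (1:ℕ) + 2 = 2 + 1 ∧ 1 ≤ 1 ∧ 1 ≤ 2 := by omega
  rw [circL, dif_pos hc, filt2, Finset.sum_singleton]
  have h1 : ((insPosL hc (1 : Equiv.Perm (Fin 2)) : Fin 1) : ℕ) = 0 := by rfl
  simp only [h1]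
  simp only [pow_zero, Equiv.Perm.sign_one, Units.val_one, mul_one, one_mul, one_smul]
  congr 1
  funext j
  fin_cases j
  simp only [show ((0:ℕ) < 0) = False by simp, show ((0:ℕ) = 0) = True by simp]
  simp [Equiv.Perm.one_apply, Fin.eta]
end Helpers


/-- shifting an abelian extension by a 1-Hom-cochain `h` (i.e. replacing
`d` by `d' = d + [d,h]_l`) yields an equivalent extension, via the isomorphism
`Φ(x+v) = x + h(x) + v`. -/
theorem statement_17 {K : Type*} [Field K] {L V : Type*}
    [AddCommGroup L] [Module K L] [AddCommGroup V] [Module K V]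
    (α : L →ₗ[K] L) (αV : V →ₗ[K] V)
    (δ : L →ₗ[K] L →ₗ[K] L) (lamL : L →ₗ[K] V →ₗ[K] V) (lamR : V →ₗ[K] L →ₗ[K] V)
    (θ : L →ₗ[K] L →ₗ[K] V) (h : L →ₗ[K] V) (hh : ∀ x : L, h (α x) = αV (h x)) :
    (fn2 (fun p q : L × V =>
        ((δ p.1 q.1, θ p.1 q.1 + lamL p.1 q.2 + lamR p.2 q.1
          + (lamR (h p.1) q.1 + lamL p.1 (h q.1) - h (δ p.1 q.1))) : L × V))
      = fn2 (dSum δ 0 lamL lamR θ)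
        + bracketL (extBeta α αV) (fn2 (dSum δ 0 lamL lamR θ))
            (fun a : Fin 1 → L × V => (((0 : L), h (a 0).1) : L × V)) 2) ∧
    (∃ Φ : (L × V) ≃ₗ[K] (L × V),
      (∀ p : L × V, Φ p = (p.1, h p.1 + p.2)) ∧
      (∀ p : L × V, Φ (extBeta α αV p) = extBeta α αV (Φ p)) ∧
      (∀ p q : L × V,
        Φ ((δ p.1 q.1, θ p.1 q.1 + lamL p.1 q.2 + lamR p.2 q.1
            + (lamR (h p.1) q.1 + lamL p.1 (h q.1) - h (δ p.1 q.1))) : L × V)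
          = dSum δ 0 lamL lamR θ (Φ p) (Φ q)) ∧
      (∀ v : V, Φ ((0 : L), v) = ((0 : L), v)) ∧
      (∀ p : L × V, (Φ p).1 = p.1)) := by
  constructor
  · funext a
    simp only [Pi.add_apply, bracketL]
    rw [circL21, circL12, show ((2-1)*(1-1) : ℕ) = 0 from rfl]
    simp only [fn2, dSum, pow_zero, one_smul, Fin.cons_zero,
      show (1 : Fin 2) = Fin.succ 0 from rfl, Fin.cons_succ,
      LinearMap.zero_apply, map_zero, zero_add, add_zero,
      Prod.mk_add_mk, Prod.mk_sub_mk, Prod.mk.injEq]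
    constructor
    · abel
    · trivial
  · refine ⟨{ toFun := fun p => (p.1, h p.1 + p.2)
              invFun := fun p => (p.1, p.2 - h p.1)
              map_add' := by intro p q; simp [Prod.ext_iff]; abel
              map_smul' := by intro c p; simp [Prod.ext_iff]
              left_inv := by intro p; simp
              right_inv := by intro p; simp }, ?_, ?_, ?_, ?_, ?_⟩
    · intro p; rfl
    · intro p; simp [extBeta, hh]
    · intro p q
      simp only [LinearEquiv.coe_mk, LinearMap.coe_mk, AddHom.coe_mk, Equiv.coe_fn_mk, dSum, LinearMap.add_apply,
        LinearMap.zero_apply, map_add, map_sub, map_zero, Prod.mk.injEq, true_and]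
      abel
    · intro v; simp
    · intro p; rfl
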